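/- Let a, b be positive odd integers with a < b, gcd(a,b) = 1 and a + b ≡ 0 (mod 8). If for every positive integer m divisible by 8 the number of integer pairs (x,y) with a·x² + b·y² = m and both x, y odd equals the number of integer pairs (x,y) with a·x² + b·y² = 4m and both x, y odd, then (a,b) ∈ {(3,5), (1,7), (1,15)}. -/

import Mathlib

private lemma sqmod9 : ∀ z : ZMod 9, z ^ 2 ≠ 5 := by decide

private lemma fourcard (u : ℤ) (hu : u ≠ 0) :
    ({(u,1),(u,-1),(-u,1),(-u,-1)} : Set (ℤ×ℤ)).ncard = 4 := by
  rw [Set.ncard_insert_of_notMem (by intro hm; simp [Prod.ext_iff] at hm; try omega),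
      Set.ncard_insert_of_notMem (by intro hm; simp [Prod.ext_iff] at hm; try omega),
      Set.ncard_insert_of_notMem (by intro hm; simp [Prod.ext_iff] at hm; try omega),
      Set.ncard_singleton]

private lemma odd_ne_zero {x : ℤ} (h : Odd x) : x ≠ 0 := by
  rintro rfl
  exact (Int.not_odd_iff_even.mpr Even.zero) h

private lemma one_le_sq {x : ℤ} (h : x ≠ 0) : 1 ≤ x ^ 2 := by
  have h1 : 1 ≤ |x| := Int.one_le_abs h
  nlinarith [sq_abs x, abs_nonneg x]

private lemma odd_small {y : ℤ} (hOy : Odd y) (h9 : y ^ 2 < 9) : y = 1 ∨ y = -1 := by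
  have h1 : -3 < y := by nlinarith [sq_nonneg (y + 3)]
  have h2 : y < 3 := by nlinarith [sq_nonneg (y - 3)]
  have := Int.odd_iff.mp hOy
  omega

private lemma solset (a b m u : ℤ) (ha : 0 < a) (hb : 0 < b) (hm : m < a + 9*b)
    (hue : a * u ^ 2 + b = m) (hOu : Odd u) :
    {p : ℤ × ℤ | a * p.1 ^ 2 + b * p.2 ^ 2 = m ∧ Odd p.1 ∧ Odd p.2}
      = {(u,1),(u,-1),(-u,1),(-u,-1)} := by
  ext ⟨x, y⟩
  simp only [Set.mem_setOf_eq, Set.mem_insert_iff, Set.mem_singleton_iff, Prod.mk.injEq]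
  constructor
  · rintro ⟨heq, hOx, hOy⟩
    have hx1 : 1 ≤ x ^ 2 := one_le_sq (odd_ne_zero hOx)
    have h9 : y ^ 2 < 9 := by
      by_contra hcon
      push_neg at hcon
      nlinarith [mul_nonneg ha.le (sub_nonneg.mpr hx1), mul_nonneg hb.le (sub_nonneg.mpr hcon)]
    have hy : y = 1 ∨ y = -1 := odd_small hOy h9
    have hby : b * y ^ 2 = b := by rcases hy with rfl | rfl <;> ring
    have hax : a * x ^ 2 = a * u ^ 2 := by linarith
    have hx2 : (x - u) * (x + u) = 0 := by
      have h' := mul_left_cancel₀ (ne_of_gt ha) hax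
      nlinarith [h']
    have hx : x = u ∨ x = -u := by
      rcases mul_eq_zero.mp hx2 with h' | h'
      · left; linarith
      · right; linarith
    rcases hx with rfl | rfl <;> rcases hy with rfl | rfl <;> tauto
  · have hOm : Odd (-1 : ℤ) := ⟨-1, by norm_num⟩
    rintro (⟨rfl, rfl⟩ | ⟨rfl, rfl⟩ | ⟨rfl, rfl⟩ | ⟨rfl, rfl⟩) <;>
      exact ⟨by ring_nf; ring_nf at hue; linarith,
        by first | exact hOu | exact hOu.neg,
        by first | exact odd_one | exact hOm⟩

set_option maxHeartbeats 1600000 in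
theorem stmt_10 (a b : ℤ) (ha : 0 < a) (hb : 0 < b)
    (hao : Odd a) (hbo : Odd b) (hab : a < b) (hgcd : Int.gcd a b = 1)
    (h8 : a + b ≡ 0 [ZMOD 8])
    (h : ∀ m : ℤ, 0 < m → 8 ∣ m →
      {p : ℤ × ℤ | a * p.1 ^ 2 + b * p.2 ^ 2 = m ∧ Odd p.1 ∧ Odd p.2}.ncard =
      {p : ℤ × ℤ | a * p.1 ^ 2 + b * p.2 ^ 2 = 4 * m ∧ Odd p.1 ∧ Odd p.2}.ncard) :
    (a, b) = (3, 5) ∨ (a, b) = (1, 7) ∨ (a, b) = (1, 15) := by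
  have h8' : (8:ℤ) ∣ a + b := by have := h8.dvd; omega
  -- Step 1 : solutions of a x² + b y² = a + b are exactly (±1, ±1)
  have hS1 : {p : ℤ × ℤ | a * p.1 ^ 2 + b * p.2 ^ 2 = a + b ∧ Odd p.1 ∧ Odd p.2}
      = {((1:ℤ),(1:ℤ)),(1,-1),(-1,1),(-1,-1)} :=
    solset a b (a+b) 1 ha hb (by linarith) (by ring) odd_one
  have hc1 := h (a+b) (by linarith) h8'
  rw [hS1, fourcard 1 one_ne_zero] at hc1
  have hne : {p : ℤ × ℤ | a * p.1 ^ 2 + b * p.2 ^ 2 = 4 * (a + b) ∧ Odd p.1 ∧ Odd p.2}.Nonempty :=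
    Set.nonempty_of_ncard_ne_zero (by omega)
  obtain ⟨⟨x₀, y₀⟩, heq0, hOx0, hOy0⟩ := hne
  simp only at heq0 hOx0 hOy0
  have hx01 : 1 ≤ x₀ ^ 2 := one_le_sq (odd_ne_zero hOx0)
  have h9 : y₀ ^ 2 < 9 := by
    by_contra hcon
    push_neg at hcon
    nlinarith [mul_nonneg ha.le (sub_nonneg.mpr hx01), mul_nonneg hb.le (sub_nonneg.mpr hcon)]
  have hby : b * y₀ ^ 2 = b := by rcases odd_small hOy0 h9 with rfl | rfl <;> ring
  have hax : a * x₀ ^ 2 = 4 * a + 3 * b := by linarith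
  have hdvd : a ∣ 3 * b := ⟨x₀ ^ 2 - 4, by rw [mul_sub]; linarith⟩
  have hco : IsCoprime a b := Int.isCoprime_iff_gcd_eq_one.mpr hgcd
  have ha3 : a ∣ 3 := hco.dvd_of_dvd_mul_right hdvd
  have ha13 : a = 1 ∨ a = 3 := by
    have h1 : a ≤ 3 := Int.le_of_dvd (by norm_num) ha3
    obtain ⟨j, hj⟩ := hao
    omega
  rcases ha13 with rfl | rfl
  · -- Case a = 1
    have hx0 : x₀ ^ 2 = 3 * b + 4 := by linarith
    by_cases hb7 : b = 7
    · subst hb7; right; left; rfl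
    by_cases hb15 : b = 15
    · subst hb15; right; right; rfl
    exfalso
    obtain ⟨s, hs0, hs2, hOs⟩ : ∃ s : ℤ, 0 ≤ s ∧ s ^ 2 = 3 * b + 4 ∧ Odd s := by
      refine ⟨|x₀|, abs_nonneg _, by rw [sq_abs]; exact hx0, ?_⟩
      rcases abs_choice x₀ with h' | h'
      · rw [h']; exact hOx0
      · rw [h']; exact hOx0.neg
    have hb3 : 3 ≤ b := by obtain ⟨j, hj⟩ := hbo; omega
    have hs9 : 9 ≤ s := by
      by_contra hcon
      push_neg at hcon
      obtain ⟨j, hj⟩ := hOs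
      interval_cases s <;> norm_num at hs2 <;> omega
    have hb25 : 25 ≤ b := by nlinarith
    have h8M : (8:ℤ) ∣ b + 9 := by omega
    have hS : {p : ℤ × ℤ | 1 * p.1 ^ 2 + b * p.2 ^ 2 = b + 9 ∧ Odd p.1 ∧ Odd p.2}
        = {((3:ℤ),(1:ℤ)),(3,-1),(-3,1),(-3,-1)} :=
      solset 1 b (b+9) 3 one_pos hb (by linarith) (by ring) ⟨1, by norm_num⟩
    have hcard := h (b+9) (by linarith) h8M
    rw [hS, fourcard 3 (by norm_num)] at hcard
    have hempty : {p : ℤ × ℤ | 1 * p.1 ^ 2 + b * p.2 ^ 2 = 4 * (b + 9) ∧ Odd p.1 ∧ Odd p.2}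
        = ∅ := by
      ext ⟨x, y⟩
      simp only [Set.mem_setOf_eq, Set.mem_empty_iff_false, iff_false, not_and]
      intro heq hOx hOy
      have hx1 : 1 ≤ x ^ 2 := one_le_sq (odd_ne_zero hOx)
      have h9y : y ^ 2 < 9 := by
        by_contra hcon
        push_neg at hcon
        nlinarith [mul_nonneg hb.le (sub_nonneg.mpr hcon)]
      have hby' : b * y ^ 2 = b := by rcases odd_small hOy h9y with rfl | rfl <;> ring
      have hx2 : x ^ 2 = s ^ 2 + 32 := by linarith
      obtain ⟨w, hw0, hw2, hOw⟩ : ∃ w : ℤ, 0 ≤ w ∧ w ^ 2 = s ^ 2 + 32 ∧ Odd w := by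
        refine ⟨|x|, abs_nonneg _, by rw [sq_abs]; exact hx2, ?_⟩
        rcases abs_choice x with h' | h'
        · rw [h']; exact hOx
        · rw [h']; exact hOx.neg
      have hgt : s < w := by
        by_contra hcon
        push_neg at hcon
        nlinarith
      have hge : s + 2 ≤ w := by
        obtain ⟨i, hi⟩ := hOw
        obtain ⟨j, hj⟩ := hOs
        omega
      nlinarith [mul_le_mul hge hge (by linarith : (0:ℤ) ≤ s + 2) (by linarith : (0:ℤ) ≤ w)]
    rw [hempty, Set.ncard_empty] at hcard
    norm_num at hcard
  · -- Case a = 3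
    have hx0 : x₀ ^ 2 = b + 4 := by linarith
    have h3x : (3:ℤ) ∣ x₀ := by
      by_contra hcon
      have h1 : (x₀ : ZMod 3) ≠ 0 := by
        simpa [ZMod.intCast_zmod_eq_zero_iff_dvd] using hcon
      have h2 : (x₀ : ZMod 3) ^ 2 = 1 := by
        revert h1
        exact (by decide : ∀ z : ZMod 3, z ≠ 0 → z ^ 2 = 1) _
      have h3 : ((b : ℤ) : ZMod 3) = 0 := by
        have hc : ((x₀ ^ 2 : ℤ) : ZMod 3) = ((b + 4 : ℤ) : ZMod 3) := by rw [hx0]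
        push_cast at hc
        rw [h2] at hc
        have : ((b : ℤ) : ZMod 3) = 1 - 4 := by linear_combination -hc
        rw [this]; decide
      have hdb : (3:ℤ) ∣ b := by
        rwa [ZMod.intCast_zmod_eq_zero_iff_dvd] at h3
      have hg : (3:ℤ) ∣ (Int.gcd 3 b : ℤ) := Int.dvd_coe_gcd (by norm_num) hdb
      rw [hgcd] at hg
      norm_num at hg
    obtain ⟨k, rfl⟩ := h3x
    have hOk : Odd k := by
      rw [Int.odd_iff]
      obtain ⟨j, hj⟩ := hOx0
      omega
    have hb' : b = 9 * k ^ 2 - 4 := by nlinarith [hx0]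
    by_cases hb5 : b = 5
    · subst hb5; left; rfl
    exfalso
    have hk9 : 9 ≤ k ^ 2 := by
      obtain ⟨j, hj⟩ := hOk
      by_contra hcon
      push_neg at hcon
      have hk3 : -3 < k ∧ k < 3 := by
        constructor <;> nlinarith [sq_nonneg (k + 3), sq_nonneg (k - 3)]
      have : k = 1 ∨ k = -1 := by omega
      rcases this with rfl | rfl <;> norm_num at hb' <;> omega
    have hk0 : k ≠ 0 := by obtain ⟨j, hj⟩ := hOk; omega
    have hM8 : (8:ℤ) ∣ 4 * (3 + b) := by
      obtain ⟨t, ht⟩ := h8'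
      exact ⟨4 * t, by linarith⟩
    have hS : {p : ℤ × ℤ | 3 * p.1 ^ 2 + b * p.2 ^ 2 = 4 * (3 + b) ∧ Odd p.1 ∧ Odd p.2}
        = {((3*k:ℤ),(1:ℤ)),(3*k,-1),(-(3*k),1),(-(3*k),-1)} :=
      solset 3 b (4*(3+b)) (3*k) (by norm_num) hb (by nlinarith) (by rw [hb']; ring) hOx0
    have hcard := h (4*(3+b)) (by linarith) hM8
    rw [hS, fourcard (3*k) (by omega)] at hcard
    have hempty : {p : ℤ × ℤ | 3 * p.1 ^ 2 + b * p.2 ^ 2 = 4 * (4 * (3 + b)) ∧ Odd p.1 ∧ Odd p.2}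
        = ∅ := by
      ext ⟨x, y⟩
      simp only [Set.mem_setOf_eq, Set.mem_empty_iff_false, iff_false, not_and]
      intro heq hOx hOy
      rw [hb'] at heq
      have hx1 : 1 ≤ x ^ 2 := one_le_sq (odd_ne_zero hOx)
      have hy25 : y ^ 2 < 25 := by
        by_contra hcon
        push_neg at hcon
        nlinarith [mul_le_mul_of_nonneg_left hcon (by nlinarith : (0:ℤ) ≤ 9 * k ^ 2 - 4)]
      have hy19 : y ^ 2 = 1 ∨ y ^ 2 = 9 := by
        have hparity := Int.odd_iff.mp hOy
        have h5 : -5 < y ∧ y < 5 := by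
          constructor <;> nlinarith [sq_nonneg (y + 5), sq_nonneg (y - 5)]
        have hy' : y = 1 ∨ y = -1 ∨ y = 3 ∨ y = -3 := by omega
        rcases hy' with rfl | rfl | rfl | rfl <;> norm_num
      rcases hy19 with hy | hy
      · have hx2 : x ^ 2 = 45 * k ^ 2 - 4 := by
          rw [hy] at heq; ring_nf at heq; linarith
        have hz : ((x : ℤ) : ZMod 9) ^ 2 = 5 := by
          have hc := congrArg (Int.cast : ℤ → ZMod 9) hx2
          push_cast at hc
          rw [hc]
          have h45 : (45 : ZMod 9) = 0 := by decide
          rw [h45]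
          ring_nf
          decide
        exact sqmod9 _ hz
      · have hx2 : 3 * x ^ 2 = 63 * k ^ 2 + 20 := by
          rw [hy] at heq; ring_nf at heq; linarith
        have h20 : (3:ℤ) ∣ 20 := ⟨x ^ 2 - 21 * k ^ 2, by linarith [mul_sub (3:ℤ) (x^2) (21*k^2)]⟩
        norm_num at h20
    rw [hempty, Set.ncard_empty] at hcard
    norm_num at hcard
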